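/- There do not exist real numbers v₁, v₂, v₃, V₁, V₂, V₃, c with vᵢ ≠ 0 and φᵢ ≠ 0 for i = 1,2,3 and with V₁/v₁, V₂/v₂, V₃/v₃ pairwise distinct, satisfying the three equations: c v₁v₂v₃(φ₁ − φ₂ − φ₃) = −v₁V₂V₃φ₁ + v₂V₁V₃φ₂ + v₃V₁V₂φ₃; c v₁v₂v₃(−φ₁ + φ₂ − φ₃) = v₁V₂V₃φ₁ − v₂V₁V₃φ₂ + v₃V₁V₂φ₃; c v₁v₂v₃(−φ₁ − φ₂ + φ₃) = v₁V₂V₃φ₁ + v₂V₁V₃φ₂ − v₃V₁V₂φ₃. -/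
import Mathlib


/-- there are no reals v₁,v₂,v₃,V₁,V₂,V₃,c with vᵢ ≠ 0, φᵢ ≠ 0,
V₁/v₁, V₂/v₂, V₃/v₃ pairwise distinct, satisfying the three diagonal equations.
Here φ₁ = (1 − v₁²)(1 − 3v₁²), φ₂ = (−1 − v₂²)(−1 − 3v₂²),
φ₃ = (1 − v₃²)(1 − 3v₃²). -/
theorem stmt_12 :
    ¬ ∃ v₁ v₂ v₃ V₁ V₂ V₃ c : ℝ,
      v₁ ≠ 0 ∧ v₂ ≠ 0 ∧ v₃ ≠ 0 ∧
      (1 - v₁ ^ 2) * (1 - 3 * v₁ ^ 2) ≠ 0 ∧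
      (-1 - v₂ ^ 2) * (-1 - 3 * v₂ ^ 2) ≠ 0 ∧
      (1 - v₃ ^ 2) * (1 - 3 * v₃ ^ 2) ≠ 0 ∧
      V₁ / v₁ ≠ V₂ / v₂ ∧ V₁ / v₁ ≠ V₃ / v₃ ∧ V₂ / v₂ ≠ V₃ / v₃ ∧
      (c * (v₁ * v₂ * v₃) *
          ((1 - v₁ ^ 2) * (1 - 3 * v₁ ^ 2) - (-1 - v₂ ^ 2) * (-1 - 3 * v₂ ^ 2)
            - (1 - v₃ ^ 2) * (1 - 3 * v₃ ^ 2)) =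
        -(v₁ * V₂ * V₃ * ((1 - v₁ ^ 2) * (1 - 3 * v₁ ^ 2)))
          + v₂ * V₁ * V₃ * ((-1 - v₂ ^ 2) * (-1 - 3 * v₂ ^ 2))
          + v₃ * V₁ * V₂ * ((1 - v₃ ^ 2) * (1 - 3 * v₃ ^ 2))) ∧
      (c * (v₁ * v₂ * v₃) *
          (-((1 - v₁ ^ 2) * (1 - 3 * v₁ ^ 2)) + (-1 - v₂ ^ 2) * (-1 - 3 * v₂ ^ 2)
            - (1 - v₃ ^ 2) * (1 - 3 * v₃ ^ 2)) =
        v₁ * V₂ * V₃ * ((1 - v₁ ^ 2) * (1 - 3 * v₁ ^ 2))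
          - v₂ * V₁ * V₃ * ((-1 - v₂ ^ 2) * (-1 - 3 * v₂ ^ 2))
          + v₃ * V₁ * V₂ * ((1 - v₃ ^ 2) * (1 - 3 * v₃ ^ 2))) ∧
      (c * (v₁ * v₂ * v₃) *
          (-((1 - v₁ ^ 2) * (1 - 3 * v₁ ^ 2)) - (-1 - v₂ ^ 2) * (-1 - 3 * v₂ ^ 2)
            + (1 - v₃ ^ 2) * (1 - 3 * v₃ ^ 2)) =
        v₁ * V₂ * V₃ * ((1 - v₁ ^ 2) * (1 - 3 * v₁ ^ 2))
          + v₂ * V₁ * V₃ * ((-1 - v₂ ^ 2) * (-1 - 3 * v₂ ^ 2))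
          - v₃ * V₁ * V₂ * ((1 - v₃ ^ 2) * (1 - 3 * v₃ ^ 2))) := by

  rintro ⟨v₁, v₂, v₃, V₁, V₂, V₃, c, hv₁, hv₂, hv₃, hφ₁, hφ₂, hφ₃, h12, h13, h23, e1, e2, e3⟩
  have k12 : V₁ * V₂ = -(c * (v₁ * v₂)) := by
    have h : (V₁ * V₂ + c * (v₁ * v₂)) * (4 * v₃ * ((1 - v₃ ^ 2) * (1 - 3 * v₃ ^ 2))) = 0 := by
      linear_combination -2*e1 - 2*e2
    rcases mul_eq_zero.1 h with h' | h'
    · linarith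
    · exact absurd h' (mul_ne_zero (mul_ne_zero four_ne_zero hv₃) hφ₃)
  have k13 : V₁ * V₃ = -(c * (v₁ * v₃)) := by
    have h : (V₁ * V₃ + c * (v₁ * v₃)) * (4 * v₂ * ((-1 - v₂ ^ 2) * (-1 - 3 * v₂ ^ 2))) = 0 := by
      linear_combination -2*e1 - 2*e3
    rcases mul_eq_zero.1 h with h' | h'
    · linarith
    · exact absurd h' (mul_ne_zero (mul_ne_zero four_ne_zero hv₂) hφ₂)
  have k23 : V₂ * V₃ = -(c * (v₂ * v₃)) := by
    have h : (V₂ * V₃ + c * (v₂ * v₃)) * (4 * v₁ * ((1 - v₁ ^ 2) * (1 - 3 * v₁ ^ 2))) = 0 := by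
      linear_combination -2*e2 - 2*e3
    rcases mul_eq_zero.1 h with h' | h'
    · linarith
    · exact absurd h' (mul_ne_zero (mul_ne_zero four_ne_zero hv₁) hφ₁)
  rcases eq_or_ne c 0 with hc | hc
  · subst hc
    simp only [zero_mul, neg_zero] at k12 k13 k23
    rcases mul_eq_zero.1 k12 with h1 | h2
    · rcases mul_eq_zero.1 k23 with h2 | h3
      · exact h12 (by rw [h1, h2, zero_div, zero_div])
      · exact h13 (by rw [h1, h3, zero_div, zero_div])
    · rcases mul_eq_zero.1 k13 with h1 | h3
      · exact h12 (by rw [h1, h2, zero_div, zero_div])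
      · exact h23 (by rw [h2, h3, zero_div, zero_div])
  · have hV₁ : V₁ ≠ 0 := by
      intro h; rw [h, zero_mul] at k12
      exact (mul_ne_zero (mul_ne_zero hc hv₁) hv₂) (by linarith [k12])
    apply h23
    rw [div_eq_div_iff hv₂ hv₃]
    have : V₁ * (V₂ * v₃) = V₁ * (V₃ * v₂) := by linear_combination v₃ * k12 - v₂ * k13
    exact mul_left_cancel₀ hV₁ this
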